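/- Let K be a perfect field, L/K a Galois extension of degree 3 with Galois group generated by g, and let ξ, ξ' ∈ K*. Set R_ξ and R_{ξ'} to be the 3×3 matrices with first row (0,0,ξ) resp. (0,0,ξ'), second row (1,0,0), third row (0,1,0). If there exist A ∈ GL₃(L) and a ∈ L* such that a·R_{ξ'} = A^{-1}·R_ξ·g(A), then ξ/ξ' = a·g(a)·g²(a), i.e. ξ/ξ' is a norm of the extension L/K. -/

import Mathlib

open Matrix

/-- Let `K` be a perfect field, `L/K` Galois of degree 3 with Galois group generated
by `g`, and `ξ, ξ' ∈ K*`. Let `R_ξ`, `R_{ξ'}` be the matrices with rows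
`(0,0,ξ), (1,0,0), (0,1,0)` resp. `(0,0,ξ'), (1,0,0), (0,1,0)`. If there are
`A ∈ GL₃(L)` and `a ∈ L*` with `a • R_{ξ'} = A⁻¹ * R_ξ * g(A)` (where `g` acts
entrywise), then `ξ/ξ' = a · g(a) · g²(a)`, i.e. `ξ/ξ'` is a norm of `L/K`. -/
theorem stmt2 (K L : Type*) [Field K] [Field L] [Algebra K L]
    [PerfectField K] [IsGalois K L] (hdeg : Module.finrank K L = 3)
    (g : L ≃ₐ[K] L) (hgen : ∀ σ : L ≃ₐ[K] L, σ ∈ Subgroup.zpowers g)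
    (ξ ξ' : K) (hξ : ξ ≠ 0) (hξ' : ξ' ≠ 0)
    (A : Matrix (Fin 3) (Fin 3) L) (hA : IsUnit A.det)
    (a : L) (ha : a ≠ 0)
    (h : a • (!![0, 0, algebraMap K L ξ'; 1, 0, 0; 0, 1, 0]) =
        A⁻¹ * (!![0, 0, algebraMap K L ξ; 1, 0, 0; 0, 1, 0]) * A.map ⇑g) :
    algebraMap K L ξ / algebraMap K L ξ' = a * g a * g (g a) := by
  set c := algebraMap K L with hc
  set R : Matrix (Fin 3) (Fin 3) L := !![0, 0, c ξ; 1, 0, 0; 0, 1, 0] with hR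
  set R' : Matrix (Fin 3) (Fin 3) L := !![0, 0, c ξ'; 1, 0, 0; 0, 1, 0] with hR'
  -- g^3 = 1
  have hfin : FiniteDimensional K L := by
    apply FiniteDimensional.of_finrank_pos
    omega
  have hcard : Fintype.card (L ≃ₐ[K] L) = 3 := by
    rw [← hdeg, ← Nat.card_eq_fintype_card]; exact IsGalois.card_aut_eq_finrank K L
  have hg3 : g * g * g = 1 := by
    have h1 : g ^ Fintype.card (L ≃ₐ[K] L) = 1 := pow_card_eq_one
    rwa [hcard, pow_succ, pow_succ, pow_one] at h1
  have hg3' : ∀ x : L, g (g (g x)) = x := by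
    intro x
    have := congrArg (fun σ : L ≃ₐ[K] L => σ x) hg3
    simpa using this
  -- g acts entrywise as a ring hom on matrix products and smuls
  have hmul : ∀ M N : Matrix (Fin 3) (Fin 3) L,
      (M * N).map ⇑g = M.map ⇑g * N.map ⇑g := by
    intro M N
    ext i j
    simp [Matrix.map_apply, Matrix.mul_apply, map_sum]
  have hsmul : ∀ (b : L) (M : Matrix (Fin 3) (Fin 3) L),
      (b • M).map ⇑g = g b • M.map ⇑g := by
    intro b M
    ext i j
    simp [Matrix.map_apply, smul_eq_mul]
  -- the matrices R, R' are fixed by g (entrywise)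
  have hRfix : R.map ⇑g = R := by
    ext i j
    fin_cases i <;> fin_cases j <;>
      simp [hR, hc, Matrix.map_apply, Matrix.vecHead, Matrix.vecTail, g.commutes ξ]
  have hR'fix : R'.map ⇑g = R' := by
    ext i j
    fin_cases i <;> fin_cases j <;>
      simp [hR', hc, Matrix.map_apply, Matrix.vecHead, Matrix.vecTail, g.commutes ξ']
  -- R^3 = c ξ • 1,  R'^3 = c ξ' • 1
  have hRcube : R * (R * R) = c ξ • 1 := by
    rw [hR, Matrix.mul_fin_three, Matrix.mul_fin_three]
    ext i j
    fin_cases i <;> fin_cases j <;>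
      simp [Matrix.one_apply, Matrix.vecHead, Matrix.vecTail]
  have hR'cube : R' * (R' * R') = c ξ' • 1 := by
    rw [hR', Matrix.mul_fin_three, Matrix.mul_fin_three]
    ext i j
    fin_cases i <;> fin_cases j <;>
      simp [Matrix.one_apply, Matrix.vecHead, Matrix.vecTail]
  -- base equation
  have hAinv : A * A⁻¹ = 1 := Matrix.mul_nonsing_inv A hA
  have E0 : a • (A * R') = R * A.map ⇑g := by
    have h2 := congrArg (A * ·) h
    rw [← mul_assoc, ← mul_assoc, hAinv, one_mul] at h2
    rw [Matrix.mul_smul] at h2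
    exact h2
  have E : ∀ (B : Matrix (Fin 3) (Fin 3) L) (b : L),
      b • (B * R') = R * B.map ⇑g →
      g b • (B.map ⇑g * R') = R * (B.map ⇑g).map ⇑g := by
    intro B b hB
    have h3 := congrArg (Matrix.map · ⇑g) hB
    rw [hsmul, hmul, hmul, hRfix, hR'fix] at h3
    exact h3
  have E1 := E A a E0
  have E2 := E (A.map ⇑g) (g a) E1
  have hA3 : ((A.map ⇑g).map ⇑g).map ⇑g = A := by
    ext i j; simp [Matrix.map_apply, hg3']
  rw [hA3] at E2
  -- chain the three equations
  have t0 : a • (A * (R' * (R' * R'))) = R * (A.map ⇑g * (R' * R')) := by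
    have := congrArg (· * (R' * R')) E0
    simp only [smul_mul_assoc, mul_assoc] at this
    exact this
  have t1 : g a • (R * (A.map ⇑g * (R' * R'))) = R * (R * ((A.map ⇑g).map ⇑g * R')) := by
    have := congrArg (fun M => R * M * R') E1
    simp only [mul_smul_comm, smul_mul_assoc, mul_assoc] at this
    exact this
  have t2 : g (g a) • (R * (R * ((A.map ⇑g).map ⇑g * R'))) = R * (R * (R * A)) := by
    have := congrArg (fun M => R * (R * M)) E2
    simp only [mul_smul_comm, mul_assoc] at this
    exact this
  have key : (g (g a) * (g a * a)) • (A * (R' * (R' * R'))) = R * (R * (R * A)) := by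
    rw [mul_smul, mul_smul, t0, t1, t2]
  rw [hR'cube] at key
  have keyR : R * (R * (R * A)) = (c ξ) • A := by
    rw [show R * (R * (R * A)) = (R * (R * R)) * A by rw [mul_assoc, mul_assoc], hRcube, smul_mul_assoc, one_mul]
  rw [keyR, mul_smul_comm, mul_one, smul_smul] at key
  -- A ≠ 0 so the scalars are equal
  have hAne : A ≠ 0 := by
    rintro rfl
    simp at hA
  have hsc : g (g a) * (g a * a) * c ξ' = c ξ := by
    by_contra hne
    apply hAne
    have hz : ((g (g a) * (g a * a) * c ξ') - c ξ) • A = 0 := by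
      rw [sub_smul, key, sub_self]
    ext i j
    have h5 : (((g (g a) * (g a * a) * c ξ') - c ξ) • A) i j = (0 : Matrix (Fin 3) (Fin 3) L) i j := by
      rw [hz]
    simp only [Matrix.smul_apply, Matrix.zero_apply, smul_eq_mul] at h5 ⊢
    rcases mul_eq_zero.mp h5 with h' | h'
    · exact absurd (sub_eq_zero.mp h') hne
    · exact h'
  have hξ'ne : c ξ' ≠ 0 := by
    intro h0
    exact hξ' (c.injective (by simpa using h0))
  field_simp
  rw [← hsc]
  ring
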